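/- Suppose every weakly-1-modular function on 2^Ω admits a modular function at uniform distance at most K_w(m). Then every 1-additive function f on 2^Ω admits a finitely-additive function μ with sup_A |f(A)-μ(A)| ≤ 2·K_w(m); i.e., K(m) ≤ 2·K_w(m). -/
import Mathlib


def OneAdditive {Ω : Type*} [DecidableEq Ω] (f : Finset Ω → ℝ) : Prop :=
  f ∅ = 0 ∧ ∀ A B : Finset Ω, Disjoint A B → |f A + f B - f (A ∪ B)| ≤ 1

def WeaklyOneModular {Ω : Type*} [DecidableEq Ω] (g : Finset Ω → ℝ) : Prop :=
  ∀ A B : Finset Ω, Disjoint A B → |g A + g B - g (A ∪ B) - g (A ∩ B)| ≤ 1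

def Modular {Ω : Type*} [DecidableEq Ω] (ν : Finset Ω → ℝ) : Prop :=
  ∀ A B : Finset Ω, ν A + ν B = ν (A ∪ B) + ν (A ∩ B)

def IsAdditive {Ω : Type*} [DecidableEq Ω] (μ : Finset Ω → ℝ) : Prop :=
  μ ∅ = 0 ∧ ∀ A B : Finset Ω, Disjoint A B → μ (A ∪ B) = μ A + μ B

theorem stmt_4 (m : ℕ) (Kw : ℝ)
    (hKw : ∀ g : Finset (Fin m) → ℝ, WeaklyOneModular g →
      ∃ ν : Finset (Fin m) → ℝ, Modular ν ∧ ∀ A, |g A - ν A| ≤ Kw) :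
    ∀ f : Finset (Fin m) → ℝ, OneAdditive f →
      ∃ μ : Finset (Fin m) → ℝ, IsAdditive μ ∧ ∀ A, |f A - μ A| ≤ 2 * Kw := by
  intro f hf
  obtain ⟨hf0, hfadd⟩ := hf
  have hwm : WeaklyOneModular f := by
    intro A B hAB
    have h := hfadd A B hAB
    rw [Finset.disjoint_iff_inter_eq_empty.mp hAB, hf0]
    simpa using h
  obtain ⟨ν, hν, hclose⟩ := hKw f hwm
  refine ⟨fun A => ν A - ν ∅, ⟨by simp, ?_⟩, ?_⟩
  · intro A B hAB
    have h := hν A B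
    rw [Finset.disjoint_iff_inter_eq_empty.mp hAB] at h
    simp only []
    linarith
  · intro A
    have h1 := hclose A
    have h2 := hclose ∅
    rw [hf0] at h2
    have h3 : |ν ∅| ≤ Kw := by simpa [abs_sub_comm] using h2
    have : |f A - (ν A - ν ∅)| ≤ |f A - ν A| + |ν ∅| := by
      have := abs_add_le (f A - ν A) (ν ∅)
      have e : f A - (ν A - ν ∅) = (f A - ν A) + ν ∅ := by ring
      rw [e]; exact this
    linarith
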